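/- Let N : ℤ⁺ → ℚ be any function. Then there is at most one function W : ℤ⁺ × ℤ^{≥0} → ℚ such that: W(1,0) = W(1,1) = 1; W(d,l) = 0 whenever 2l > 3d−1; W satisfies recursion (I) at every (d,l) with d ≥ 2, l ≥ 1, 3d−2l ≥ 2; W satisfies recursion (II) at every (d,l) with d ≥ 2, l ≥ 2; and, for every d ≥ 2, W(d,0) = Σ_{d₁,d₂ ≥ 1, d₁+d₂=d} ( d₁·C(3d−3, 3d₁−2) − (d₂+1)·C(3d−3, 3d₁−3) ) · W(d₁,0)·W(d₂+1,1). That is, any two such functions agree everywhere. -/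

import Mathlib

open Finset

/-- Binomial coefficient `C(n,k)` as a rational number, with the convention that
`C(n,k) = 0` whenever `k < 0` or `k > n`. -/
def binom (n k : ℤ) : ℚ :=
  if 0 ≤ k ∧ k ≤ n then (n.toNat.choose k.toNat : ℚ) else 0

/-- Kontsevich's recursion for the genus 0 Gromov-Witten invariants of `ℙ²`. -/
def KontsevichRec (N : ℕ → ℚ) : Prop :=
  ∀ d : ℕ, 2 ≤ d →
    N d = (1 / (6 * ((d : ℚ) - 1))) *
      ∑ d₁ ∈ Finset.Ico 1 d,
        (((d₁ : ℚ) * ((d - d₁ : ℕ) : ℚ)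
            - 2 * ((d₁ : ℚ) - ((d - d₁ : ℕ) : ℚ)) ^ 2 / (3 * (d : ℚ) - 2))
          * binom (3 * (d : ℤ) - 2) (3 * (d₁ : ℤ) - 1)
          * (d₁ : ℚ) * ((d - d₁ : ℕ) : ℚ) * N d₁ * N (d - d₁))

/-- Pairs `(d₀, d')` of positive integers with `d₀ + 2d' = d`. -/
def pairsHalf (d : ℕ) : Finset (ℕ × ℕ) :=
  (Finset.range (d + 1) ×ˢ Finset.range (d + 1)).filter
    fun p => 1 ≤ p.1 ∧ 1 ≤ p.2 ∧ p.1 + 2 * p.2 = d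

/-- Pairs `(d₁, d₂)` of positive integers with `d₁ + d₂ = d`. -/
def pairsSum (d : ℕ) : Finset (ℕ × ℕ) :=
  (Finset.HasAntidiagonal.antidiagonal d).filter fun p => 1 ≤ p.1 ∧ 1 ≤ p.2

/-- The term `T₀(d,l) = −(−2)^{3d/2−4} d² N(d/2)` if `d` is even and `2l = 3d−2`,
and `0` otherwise; the integer power of `−2` is taken in `ℚ`. -/
def T0 (N : ℕ → ℚ) (d l : ℕ) : ℚ :=
  if Even d ∧ 2 * l + 2 = 3 * d then
    -((-2 : ℚ) ^ (3 * (d : ℤ) / 2 - 4)) * (d : ℚ) ^ 2 * N (d / 2)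
  else 0

/-- Solomon's recursion (I) for the Welschinger invariants of `(ℙ²,τ₂)`. -/
def RecI (N : ℕ → ℚ) (W : ℕ → ℕ → ℚ) (d l : ℕ) : Prop :=
  W d l = T0 N d l
    + ∑ p ∈ pairsHalf d,
        (-2 : ℚ) ^ (3 * p.2 - 1) * (p.1 : ℚ) * (p.2 : ℚ) ^ 3
          * binom ((l : ℤ) - 1) (3 * (p.2 : ℤ) - 1) * N p.2 * W p.1 (l - 3 * p.2)
    + ∑ q ∈ pairsSum d, ∑ r ∈ Finset.HasAntidiagonal.antidiagonal (l - 1),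
        binom ((l : ℤ) - 1) (r.1 : ℤ)
          * ((q.1 : ℚ) * (q.2 : ℚ)
                * binom (3 * (d : ℤ) - 2 * (l : ℤ) - 2) (3 * (q.1 : ℤ) - 2 * (r.1 : ℤ) - 2)
              - (q.1 : ℚ) ^ 2
                * binom (3 * (d : ℤ) - 2 * (l : ℤ) - 2) (3 * (q.1 : ℤ) - 2 * (r.1 : ℤ) - 1))
          * W q.1 r.1 * W q.2 r.2

/-- Solomon's recursion (II) for the Welschinger invariants of `(ℙ²,τ₂)`. -/
def RecII (N : ℕ → ℚ) (W : ℕ → ℕ → ℚ) (d l : ℕ) : Prop :=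
  W d l =
    ∑ p ∈ pairsHalf d,
        (-2 : ℚ) ^ (3 * p.2 - 2) * (p.1 : ℚ) * (p.2 : ℚ) ^ 2
          * ((p.1 : ℚ) * binom ((l : ℤ) - 2) (3 * (p.2 : ℤ) - 2)
              - 2 * (p.2 : ℚ) * binom ((l : ℤ) - 2) (3 * (p.2 : ℤ) - 1))
          * N p.2 * W p.1 (l - 3 * p.2)
    + ∑ q ∈ pairsSum d, ∑ r ∈ Finset.HasAntidiagonal.antidiagonal (l - 2),
        binom ((l : ℤ) - 2) (r.1 : ℤ)
          * ((q.1 : ℚ) * (q.2 : ℚ)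
                * binom (3 * (d : ℤ) - 2 * (l : ℤ) - 1) (3 * (q.1 : ℤ) - 2 * (r.1 : ℤ) - 2)
              - (q.1 : ℚ) ^ 2
                * binom (3 * (d : ℤ) - 2 * (l : ℤ) - 1) (3 * (q.1 : ℤ) - 2 * (r.1 : ℤ) - 1))
          * W q.1 r.1 * W q.2 (r.2 + 1)

/-- The formula expressing the purely real invariant `W(d,0)` obtained by taking
the difference between the two recursions for `W(d+1,2)`. -/
def SolFormula (W : ℕ → ℕ → ℚ) (d : ℕ) : Prop :=
  W d 0 = ∑ q ∈ pairsSum d,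
    ((q.1 : ℚ) * binom (3 * (d : ℤ) - 3) (3 * (q.1 : ℤ) - 2)
      - ((q.2 : ℚ) + 1) * binom (3 * (d : ℤ) - 3) (3 * (q.1 : ℤ) - 3))
    * W q.1 0 * W (q.2 + 1) 1

/-- The full set of conditions on the Welschinger invariants `W(d,l)` of `(ℙ²,τ₂)`:
base cases, dimension vanishing, Solomon's recursions (I) and (II), and
the formula for `W(d,0)`. -/
def GoodW (N : ℕ → ℚ) (W : ℕ → ℕ → ℚ) : Prop :=
  W 1 0 = 1 ∧ W 1 1 = 1
    ∧ (∀ d l : ℕ, 1 ≤ d → 3 * d ≤ 2 * l → W d l = 0)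
    ∧ (∀ d l : ℕ, 2 ≤ d → 1 ≤ l → 2 * l + 2 ≤ 3 * d → RecI N W d l)
    ∧ (∀ d l : ℕ, 2 ≤ d → 2 ≤ l → RecII N W d l)
    ∧ (∀ d : ℕ, 2 ≤ d → SolFormula W d)

lemma mem_pairsHalf' {d : ℕ} {p : ℕ × ℕ} (h : p ∈ pairsHalf d) :
    1 ≤ p.1 ∧ 1 ≤ p.2 ∧ p.1 + 2 * p.2 = d := by
  simp only [pairsHalf, Finset.mem_filter] at h
  exact h.2

lemma mem_pairsSum' {d : ℕ} {p : ℕ × ℕ} (h : p ∈ pairsSum d) :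
    1 ≤ p.1 ∧ 1 ≤ p.2 ∧ p.1 + p.2 = d := by
  simp only [pairsSum, Finset.mem_filter, Finset.HasAntidiagonal.mem_antidiagonal] at h
  exact ⟨h.2.1, h.2.2, h.1⟩

/-- There is at most one function `W` on `ℤ⁺ × ℤ^{≥0}` satisfying all the
conditions of `GoodW`. -/
theorem stmt_3 (N : ℕ → ℚ) (W W' : ℕ → ℕ → ℚ)
    (hW : GoodW N W) (hW' : GoodW N W') :
    ∀ d l : ℕ, 1 ≤ d → W d l = W' d l := by

  obtain ⟨h10, h11, hvan, hI, hII, hS⟩ := hW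
  obtain ⟨h10', h11', hvan', hI', hII', hS'⟩ := hW'
  intro d
  induction d using Nat.strong_induction_on with
  | _ d IH =>
  intro l hd
  rcases eq_or_lt_of_le hd with h1 | h2
  · -- d = 1
    subst h1
    match l with
    | 0 => rw [h10, h10']
    | 1 => rw [h11, h11']
    | (n+2) =>
      rw [hvan 1 (n+2) le_rfl (by omega), hvan' 1 (n+2) le_rfl (by omega)]
  · -- d ≥ 2
    have hd2 : 2 ≤ d := h2
    have key1 : W d 1 = W' d 1 := by
      have e1 := hI d 1 hd2 le_rfl (by omega)
      have e2 := hI' d 1 hd2 le_rfl (by omega)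
      rw [RecI] at e1 e2
      rw [e1, e2]
      congr 1
      · congr 1
        refine Finset.sum_congr rfl fun p hp => ?_
        obtain ⟨hp1, hp2, hps⟩ := mem_pairsHalf' hp
        rw [IH p.1 (by omega) _ hp1]
      · refine Finset.sum_congr rfl fun q hq => ?_
        obtain ⟨hq1, hq2, hqs⟩ := mem_pairsSum' hq
        refine Finset.sum_congr rfl fun r _ => ?_
        rw [IH q.1 (by omega) _ hq1, IH q.2 (by omega) _ hq2]
    match l with
    | 0 =>
      have e1 := hS d hd2
      have e2 := hS' d hd2
      rw [SolFormula] at e1 e2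
      rw [e1, e2]
      refine Finset.sum_congr rfl fun q hq => ?_
      obtain ⟨hq1, hq2, hqs⟩ := mem_pairsSum' hq
      rw [IH q.1 (by omega) _ hq1]
      rcases eq_or_lt_of_le (show q.2 + 1 ≤ d by omega) with h | h
      · rw [h, key1]
      · rw [IH (q.2 + 1) h _ (by omega)]
    | 1 => exact key1
    | (n+2) =>
      have e1 := hII d (n+2) hd2 (by omega)
      have e2 := hII' d (n+2) hd2 (by omega)
      rw [RecII] at e1 e2
      rw [e1, e2]
      congr 1
      · refine Finset.sum_congr rfl fun p hp => ?_
        obtain ⟨hp1, hp2, hps⟩ := mem_pairsHalf' hp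
        rw [IH p.1 (by omega) _ hp1]
      · refine Finset.sum_congr rfl fun q hq => ?_
        obtain ⟨hq1, hq2, hqs⟩ := mem_pairsSum' hq
        refine Finset.sum_congr rfl fun r _ => ?_
        rw [IH q.1 (by omega) _ hq1, IH q.2 (by omega) _ hq2]
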